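/- Let K be a field in which -1 is not a square, and let D_K be the minimal Dress ring of K, i.e., the subring of K generated by the set {(1+x^2)⁻¹ : x ∈ K}. Then D_K equals the intersection of all valuation subrings V of K such that -1 is not a square in the residue field of V. Equivalently, for z ∈ K: z ∈ D_K if and only if z ∈ V for every valuation subring V of K whose residue field does not contain a square root of -1. -/

import Mathlib

namespace DressAux

variable {K : Type*} [Field K]

/-- The minimal Dress ring, as an auxiliary definition. -/
def A (K : Type*) [Field K] : Subring K :=
  Subring.closure {r : K | ∃ x : K, r = (1 + x ^ 2)⁻¹}

lemma inv_mem (x : K) : (1 + x ^ 2)⁻¹ ∈ A K := Subring.subset_closure ⟨x, rfl⟩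

lemma one_add_sq_ne (hK : ¬ IsSquare (-1 : K)) (x : K) : 1 + x ^ 2 ≠ 0 := by
  intro h
  exact hK ⟨x, by linear_combination -h⟩

lemma two_ne (hK : ¬ IsSquare (-1 : K)) : (2 : K) ≠ 0 := by
  intro h
  exact hK ⟨1, by linear_combination -h⟩

/-- Key identity: `k/(1+k²) ∈ A` for every `k`. -/
lemma mul_inv_mem (hK : ¬ IsSquare (-1 : K)) (k : K) : k * (1 + k ^ 2)⁻¹ ∈ A K := by
  by_cases hk : k = -1
  · have h1 : k * (1 + k ^ 2)⁻¹ = -((1 + 1 ^ 2)⁻¹) := by subst hk; norm_num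
    rw [h1]
    exact neg_mem (inv_mem 1)
  · have hk1 : k + 1 ≠ 0 := fun h => hk (by linear_combination h)
    have hk2 : 1 + k ^ 2 ≠ 0 := one_add_sq_ne hK k
    have ht2 : 1 + ((k - 1) / (k + 1)) ^ 2 ≠ 0 := one_add_sq_ne hK _
    have h2 : (2 : K) ≠ 0 := two_ne hK
    have h12 : (1 : K) + 1 ^ 2 ≠ 0 := by
      intro h; exact h2 (by linear_combination h)
    have hid : k * (1 + k ^ 2)⁻¹ = (1 + ((k - 1) / (k + 1)) ^ 2)⁻¹ - (1 + 1 ^ 2)⁻¹ := by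
      have ht : 1 + ((k - 1) / (k + 1)) ^ 2 = (2 * (1 + k ^ 2)) / ((k + 1) ^ 2) := by
        field_simp
        ring
      have h12' : ((1 : K) + 1 ^ 2)⁻¹ = 1 / 2 := by norm_num
      have h2k : 2 * (1 + k ^ 2) ≠ 0 := mul_ne_zero h2 hk2
      rw [ht, inv_div, h12']
      field_simp
      ring
    rw [hid]
    exact sub_mem (inv_mem _) (inv_mem 1)

end DressAux

/-- The minimal Dress ring of a field `K` (with `-1` not a square in `K`)
is the intersection of the valuation subrings of `K` whose residue field does not contain
a square root of `-1`. -/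
theorem minimalDressRing_eq_iInter_valuationSubrings (K : Type*) [Field K]
    (hK : ¬ IsSquare (-1 : K)) (z : K) :
    z ∈ Subring.closure {r : K | ∃ x : K, r = (1 + x ^ 2)⁻¹} ↔
      ∀ V : ValuationSubring K,
        ¬ IsSquare (-1 : IsLocalRing.ResidueField V) → z ∈ V := by
  open DressAux in
  constructor
  · -- forward direction
    intro hz V hV
    have key : ∀ y : K, y ∈ V → (1 + y ^ 2)⁻¹ ∈ V := by
      intro y hy
      have hne : 1 + y ^ 2 ≠ 0 := one_add_sq_ne hK y
      have hmem : (1 + y ^ 2) ∈ V := add_mem (one_mem V) (pow_mem hy 2)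
      by_cases hu : IsUnit (⟨1 + y ^ 2, hmem⟩ : V)
      · obtain ⟨w, hw⟩ := hu.exists_right_inv
        have hwK : (1 + y ^ 2) * (w : K) = 1 := by
          have h := congrArg (Subtype.val) hw
          push_cast at h
          exact h
        have hwinv : (w : K) = (1 + y ^ 2)⁻¹ := eq_inv_of_mul_eq_one_right hwK
        exact hwinv ▸ w.2
      · exfalso
        have hmax : (⟨1 + y ^ 2, hmem⟩ : V) ∈ IsLocalRing.maximalIdeal V :=
          (IsLocalRing.mem_maximalIdeal _).2 hu
        have h0 : IsLocalRing.residue V ⟨1 + y ^ 2, hmem⟩ = 0 :=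
          (Ideal.Quotient.eq_zero_iff_mem).2 hmax
        apply hV
        refine ⟨IsLocalRing.residue V ⟨y, hy⟩, ?_⟩
        have : (⟨1 + y ^ 2, hmem⟩ : V) = 1 + ⟨y, hy⟩ * ⟨y, hy⟩ := by
          ext; push_cast; ring
        rw [this, map_add, map_one, map_mul] at h0
        linear_combination -h0
    have hle : Subring.closure {r : K | ∃ x : K, r = (1 + x ^ 2)⁻¹} ≤ V.toSubring := by
      rw [Subring.closure_le]
      rintro r ⟨x, rfl⟩
      rcases V.mem_or_inv_mem x with hx | hx
      · exact key x hx
      · by_cases hx0 : x = 0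
        · subst hx0; norm_num
        · have hne : 1 + x ^ 2 ≠ 0 := one_add_sq_ne hK x
          have hne' : 1 + (x⁻¹) ^ 2 ≠ 0 := one_add_sq_ne hK x⁻¹
          have hid : (1 + x ^ 2)⁻¹ = (x⁻¹) ^ 2 * (1 + (x⁻¹) ^ 2)⁻¹ := by
            rw [eq_comm, mul_inv_eq_iff_eq_mul₀ hne']
            field_simp
            ring
          rw [hid]
          exact mul_mem (pow_mem hx 2) (key _ hx)
    exact hle hz
  · -- reverse direction
    intro hz
    by_contra hzA
    have hzA' : z ∉ A K := hzA
    -- the conductor ideal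
    let J : Ideal (A K) :=
      { carrier := {d | (d : K) * z ∈ A K}
        add_mem' := by
          intro a b ha hb
          show ((a + b : A K) : K) * z ∈ A K
          push_cast
          rw [add_mul]
          exact add_mem ha hb
        zero_mem' := by
          show ((0 : A K) : K) * z ∈ A K
          push_cast
          rw [zero_mul]; exact zero_mem _
        smul_mem' := by
          intro c d hd
          show ((c * d : A K) : K) * z ∈ A K
          push_cast
          rw [mul_assoc]
          exact mul_mem c.2 hd }
    have hJ : J ≠ ⊤ := by
      intro h
      apply hzA'
      have h1 : (1 : A K) ∈ J := by rw [h]; trivial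
      have h2 : ((1 : A K) : K) * z ∈ A K := h1
      rwa [OneMemClass.coe_one, one_mul] at h2
    obtain ⟨m, hm, hJm⟩ := Ideal.exists_le_maximal J hJ
    have one_nm : (1 : A K) ∉ m := fun h => hm.ne_top (Ideal.eq_top_iff_one m |>.2 h)
    -- the localization of A at m, as a valuation subring
    let Vs : Subring K :=
      { carrier := {k | ∃ q : A K, q ∉ m ∧ (q : K) * k ∈ A K}
        one_mem' := ⟨1, one_nm, by simpa using one_mem (A K)⟩
        zero_mem' := ⟨1, one_nm, by simpa using zero_mem (A K)⟩
        add_mem' := by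
          rintro a b ⟨p, hp, hpa⟩ ⟨q, hq, hqb⟩
          refine ⟨p * q, fun h => ((hm.isPrime.mem_or_mem h).elim hp hq), ?_⟩
          push_cast
          have : (p : K) * (q : K) * (a + b) = (q : K) * ((p : K) * a) + (p : K) * ((q : K) * b) := by ring
          rw [this]
          exact add_mem (mul_mem q.2 hpa) (mul_mem p.2 hqb)
        neg_mem' := by
          rintro a ⟨p, hp, hpa⟩
          refine ⟨p, hp, ?_⟩
          rw [mul_neg]
          exact neg_mem hpa
        mul_mem' := by
          rintro a b ⟨p, hp, hpa⟩ ⟨q, hq, hqb⟩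
          refine ⟨p * q, fun h => ((hm.isPrime.mem_or_mem h).elim hp hq), ?_⟩
          push_cast
          have : (p : K) * (q : K) * (a * b) = ((p : K) * a) * ((q : K) * b) := by ring
          rw [this]
          exact mul_mem hpa hqb }
    have hAV : ∀ a ∈ A K, a ∈ Vs := fun a ha => ⟨1, one_nm, by simpa using ha⟩
    let V : ValuationSubring K :=
      { toSubring := Vs
        mem_or_inv_mem' := by
          intro k
          by_cases hk0 : k = 0
          · left; subst hk0; exact zero_mem Vs
          have hne : 1 + k ^ 2 ≠ 0 := one_add_sq_ne hK k
          have hb : (1 + k ^ 2)⁻¹ ∈ A K := inv_mem k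
          have ha : k * (1 + k ^ 2)⁻¹ ∈ A K := mul_inv_mem hK k
          by_cases hbm : (⟨(1 + k ^ 2)⁻¹, hb⟩ : A K) ∈ m
          · right
            refine ⟨1 - ⟨(1 + k ^ 2)⁻¹, hb⟩, ?_, ?_⟩
            · intro hmem
              exact one_nm (by simpa using add_mem hmem hbm)
            · have hcast : ((1 - (⟨(1 + k ^ 2)⁻¹, hb⟩ : A K) : A K) : K) * k⁻¹
                  = k * (1 + k ^ 2)⁻¹ := by
                push_cast
                field_simp
                ring
              rw [hcast]; exact ha
          · left
            refine ⟨⟨(1 + k ^ 2)⁻¹, hb⟩, hbm, ?_⟩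
            show (1 + k ^ 2)⁻¹ * k ∈ A K
            rw [mul_comm]
            exact ha }
    -- z is not in V
    have hzV : z ∉ V := by
      rintro ⟨q, hq, hqz⟩
      exact hq (hJm hqz)
    -- the residue field of V has no square root of -1
    have hres : ¬ IsSquare (-1 : IsLocalRing.ResidueField V) := by
      rintro ⟨s, hs⟩
      obtain ⟨r, rfl⟩ := IsLocalRing.residue_surjective s
      have h0 : IsLocalRing.residue V (1 + r * r) = 0 := by
        rw [map_add, map_one, map_mul]
        linear_combination -hs
      have hmax : (1 + r * r : V) ∈ IsLocalRing.maximalIdeal V :=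
        (Ideal.Quotient.eq_zero_iff_mem).1 h0
      have hneK : 1 + (r : K) ^ 2 ≠ 0 := one_add_sq_ne hK (r : K)
      have hwV : (1 + (r : K) ^ 2)⁻¹ ∈ V := hAV _ (inv_mem (r : K))
      have hunit : IsUnit (1 + r * r : V) := by
        refine IsUnit.of_mul_eq_one ⟨(1 + (r : K) ^ 2)⁻¹, hwV⟩ ?_
        ext
        push_cast
        field_simp
      exact ((IsLocalRing.mem_maximalIdeal _).1 hmax) hunit
    exact hzV (hz V hres)
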